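/- Upper half of the Law of the Iterated Logarithm: for μ-almost every X ∈ 2^ℕ, for every real λ > 1 there exists N ∈ ℕ such that for all n > N, S_n(X) ≤ n/2 + λ·√((n/2)·log log n). -/

import Mathlib

open MeasureTheory Filter

/-- The sum of the first `n` coordinates of a point of Cantor space, as a real number. -/
noncomputable def coinSum (X : ℕ → Bool) (n : ℕ) : ℝ :=
  ∑ i ∈ Finset.range n, ((X i).toNat : ℝ)

/-- `μ` is the fair-coin measure on Cantor space: the probability measure under which the
coordinates are i.i.d. Bernoulli(1/2), i.e. every finite cylinder determined by prescribing
the coordinates in a finite set `s` has measure `(1/2)^|s|`. -/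
def IsFairCoin (μ : Measure (ℕ → Bool)) : Prop :=
  IsProbabilityMeasure μ ∧
    ∀ (s : Finset ℕ) (f : ℕ → Bool),
      μ {X | ∀ i ∈ s, X i = f i} = (1 / 2) ^ s.card
noncomputable local instance : DecidableEq (ℕ → Bool) := Classical.decEq _

/-- The finite cube: all `X : ℕ → Bool` supported on `[0, n)`. -/
noncomputable def cube : ℕ → Finset (ℕ → Bool)
  | 0 => {fun _ => false}
  | n + 1 => ((cube n) ×ˢ (Finset.univ : Finset Bool)).image
      (fun p => Function.update p.1 n p.2)

lemma cube_apply {n : ℕ} {v : ℕ → Bool} (hv : v ∈ cube n) {i : ℕ} (hi : n ≤ i) :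
    v i = false := by
  induction n generalizing v i with
  | zero =>
    simp only [cube, Finset.mem_singleton] at hv
    rw [hv]
  | succ n ih =>
    simp only [cube, Finset.mem_image, Finset.mem_product] at hv
    obtain ⟨⟨w, b⟩, ⟨hw, -⟩, rfl⟩ := hv
    have hin : i ≠ n := by omega
    rw [Function.update_of_ne hin]
    exact ih hw (by omega)

lemma cube_injOn (n : ℕ) : Set.InjOn (fun p : (ℕ → Bool) × Bool => Function.update p.1 n p.2)
    ↑((cube n) ×ˢ (Finset.univ : Finset Bool)) := by
  rintro ⟨w₁, b₁⟩ h₁ ⟨w₂, b₂⟩ h₂ h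
  simp only [Finset.mem_coe, Finset.mem_product] at h₁ h₂
  have hb : b₁ = b₂ := by
    have := congrFun h n
    dsimp only at this
    simpa using this
  have hw : w₁ = w₂ := by
    funext i
    rcases eq_or_ne i n with rfl | hi
    · rw [cube_apply h₁.1 le_rfl, cube_apply h₂.1 le_rfl]
    · have := congrFun h i
      dsimp only at this
      rwa [Function.update_of_ne hi, Function.update_of_ne hi] at this
  rw [hb, hw]

lemma card_cube (n : ℕ) : (cube n).card = 2 ^ n := by
  induction n with
  | zero => simp [cube]
  | succ n ih =>
    rw [cube, Finset.card_image_of_injOn (cube_injOn n), Finset.card_product, ih]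
    simp [pow_succ]

lemma sum_cube_succ (n : ℕ) (g : (ℕ → Bool) → ℝ) :
    ∑ v ∈ cube (n + 1), g v
      = ∑ v ∈ cube n, (g v + g (Function.update v n true)) := by
  rw [cube, Finset.sum_image (fun p hp q hq h => cube_injOn n hp hq h)]
  rw [Finset.sum_product]
  refine Finset.sum_congr rfl fun v hv => ?_
  have h1 : Function.update v n false = v := by
    funext i
    rcases eq_or_ne i n with rfl | hi
    · rw [Function.update_self, cube_apply hv le_rfl]
    · rw [Function.update_of_ne hi]
  rw [Fintype.sum_bool, h1, add_comm]

def trunc (n : ℕ) (X : ℕ → Bool) : ℕ → Bool := fun i => if i < n then X i else false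

lemma trunc_mem_cube (n : ℕ) (X : ℕ → Bool) : trunc n X ∈ cube n := by
  induction n with
  | zero =>
    simp only [cube, Finset.mem_singleton]
    funext i
    simp [trunc]
  | succ n ih =>
    simp only [cube, Finset.mem_image, Finset.mem_product]
    refine ⟨⟨trunc n X, X n⟩, ⟨ih, Finset.mem_univ _⟩, ?_⟩
    funext i
    rcases eq_or_ne i n with rfl | hi
    · simp [trunc, Function.update_self]
    · rw [Function.update_of_ne hi]
      simp only [trunc]
      rcases Nat.lt_or_ge i n with h | h
      · rw [if_pos h, if_pos (by omega)]
      · rw [if_neg (by omega), if_neg (by omega)]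

lemma trunc_eq_of_lt {n i : ℕ} (h : i < n) (X : ℕ → Bool) : trunc n X i = X i := if_pos h

open Classical in
/-- Counting lemma: the measure of an event depending only on the first `n` coordinates. -/
lemma measure_local {μ : Measure (ℕ → Bool)} (hμ : IsFairCoin μ) (n : ℕ)
    (p : (ℕ → Bool) → Prop)
    (hp : ∀ X Y : ℕ → Bool, (∀ i < n, X i = Y i) → p X → p Y) :
    μ {X | p X} = ((cube n).filter p).card * (1 / 2 : ENNReal) ^ n := by
  classical
  have hset : {X | p X} = ⋃ v ∈ (cube n).filter p, {X | ∀ i ∈ Finset.range n, X i = v i} := by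
    ext X
    simp only [Set.mem_setOf_eq, Set.mem_iUnion, Finset.mem_filter, Finset.mem_range,
      exists_prop]
    constructor
    · intro hX
      refine ⟨trunc n X, ⟨trunc_mem_cube n X, hp X _ (fun i hi => (trunc_eq_of_lt hi X).symm) hX⟩,
        fun i hi => (trunc_eq_of_lt hi X).symm⟩
    · rintro ⟨v, ⟨-, hv⟩, hXv⟩
      exact hp v X (fun i hi => (hXv i hi).symm) hv
  rw [hset, measure_biUnion_finset]
  · have hone : ∀ v ∈ (cube n).filter p,
        μ {X | ∀ i ∈ Finset.range n, X i = v i} = (1 / 2 : ENNReal) ^ n := by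
      intro v _
      have := hμ.2 (Finset.range n) v
      rwa [Finset.card_range] at this
    rw [Finset.sum_congr rfl hone, Finset.sum_const, nsmul_eq_mul]
  · -- pairwise disjoint
    intro v hv w hw hvw
    simp only [Finset.coe_filter, Set.mem_setOf_eq] at hv hw
    dsimp only [Function.onFun]
    rw [Set.disjoint_left]
    intro X hXv hXw
    apply hvw
    funext i
    rcases Nat.lt_or_ge i n with h | h
    · rw [← hXv i (Finset.mem_range.2 h), ← hXw i (Finset.mem_range.2 h)]
    · rw [cube_apply hv.1 h, cube_apply hw.1 h]
  · intro v _
    have : {X : ℕ → Bool | ∀ i ∈ Finset.range n, X i = v i}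
        = ⋂ i ∈ Finset.range n, {X : ℕ → Bool | X i = v i} := by
      ext X; simp
    rw [this]
    refine MeasurableSet.biInter (Finset.range n).countable_toSet (fun i _ => ?_)
    have : {X : ℕ → Bool | X i = v i} = (fun X : ℕ → Bool => X i) ⁻¹' {v i} := rfl
    rw [this]
    exact (measurable_pi_apply i) (measurableSet_singleton (v i))

/-- The normalized exponential martingale. -/
noncomputable def mart (s : ℝ) (k : ℕ) (X : ℕ → Bool) : ℝ :=
  Real.exp (s * (coinSum X k - k / 2)) / (Real.cosh (s / 2)) ^ k

lemma mart_pos {s : ℝ} {k : ℕ} {X : ℕ → Bool} : 0 < mart s k X :=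
  div_pos (Real.exp_pos _) (pow_pos (Real.cosh_pos _) k)

lemma mart_zero (s : ℝ) (X : ℕ → Bool) : mart s 0 X = 1 := by
  simp [mart, coinSum]

lemma coinSum_succ (X : ℕ → Bool) (k : ℕ) :
    coinSum X (k + 1) = coinSum X k + ((X k).toNat : ℝ) :=
  Finset.sum_range_succ _ _

lemma mart_succ (s : ℝ) (k : ℕ) (X : ℕ → Bool) :
    mart s (k + 1) X = mart s k X *
      (Real.exp (s * (((X k).toNat : ℝ) - 1 / 2)) / Real.cosh (s / 2)) := by
  rw [mart, mart, coinSum_succ, div_mul_div_comm, ← Real.exp_add, ← pow_succ]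
  congr 2
  push_cast
  ring

lemma coinSum_local {n : ℕ} {X Y : ℕ → Bool} (h : ∀ i < n, X i = Y i) {k : ℕ} (hk : k ≤ n) :
    coinSum X k = coinSum Y k := by
  refine Finset.sum_congr rfl fun i hi => ?_
  rw [h i (lt_of_lt_of_le (Finset.mem_range.1 hi) hk)]

lemma mart_local {n : ℕ} {X Y : ℕ → Bool} (h : ∀ i < n, X i = Y i) {s : ℝ} {k : ℕ}
    (hk : k ≤ n) : mart s k X = mart s k Y := by
  rw [mart, mart, coinSum_local h hk]

open Classical in
/-- The stopped exponential martingale: stopped at the first time `mart s · X` reaches `a`. -/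
noncomputable def stopped (a s : ℝ) : ℕ → (ℕ → Bool) → ℝ
  | 0, _ => 1
  | n + 1, X => if ∃ j ≤ n, a ≤ mart s j X then stopped a s n X else mart s (n + 1) X

lemma stopped_nonneg (a s : ℝ) (n : ℕ) (X : ℕ → Bool) : 0 ≤ stopped a s n X := by
  induction n with
  | zero => exact zero_le_one
  | succ n ih =>
    rw [stopped]
    split
    · exact ih
    · exact le_of_lt mart_pos

lemma stopped_eq_mart {a s : ℝ} {n : ℕ} {X : ℕ → Bool}
    (h : ¬ ∃ j ≤ n, a ≤ mart s j X) : stopped a s n X = mart s n X := by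
  cases n with
  | zero => exact (mart_zero s X).symm
  | succ n =>
    rw [stopped, if_neg]
    intro ⟨j, hj, hja⟩
    exact h ⟨j, le_trans hj (Nat.le_succ n), hja⟩

lemma le_stopped {a s : ℝ} {n : ℕ} {X : ℕ → Bool}
    (h : ∃ k ≤ n, a ≤ mart s k X) : a ≤ stopped a s n X := by
  induction n with
  | zero =>
    obtain ⟨k, hk, hka⟩ := h
    interval_cases k
    rw [mart_zero] at hka
    exact hka.trans_eq rfl
  | succ n ih =>
    rw [stopped]
    by_cases hc : ∃ j ≤ n, a ≤ mart s j X
    · rw [if_pos hc]; exact ih hc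
    · rw [if_neg hc]
      obtain ⟨k, hk, hka⟩ := h
      rcases Nat.lt_or_ge k (n + 1) with h1 | h1
      · exact absurd ⟨k, Nat.lt_succ_iff.1 h1, hka⟩ hc
      · have : k = n + 1 := le_antisymm hk h1
        rwa [this] at hka

lemma stopped_local {a s : ℝ} {n : ℕ} {X Y : ℕ → Bool} (h : ∀ i < n, X i = Y i) :
    stopped a s n X = stopped a s n Y := by
  induction n with
  | zero => rfl
  | succ n ih =>
    have h' : ∀ i < n, X i = Y i := fun i hi => h i (Nat.lt_succ_of_lt hi)
    have hm : ∀ j ≤ n, mart s j X = mart s j Y := fun j hj => mart_local h' hj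
    rw [stopped, stopped]
    have hc : (∃ j ≤ n, a ≤ mart s j X) ↔ (∃ j ≤ n, a ≤ mart s j Y) := by
      constructor
      · rintro ⟨j, hj, hja⟩; exact ⟨j, hj, (hm j hj) ▸ hja⟩
      · rintro ⟨j, hj, hja⟩; exact ⟨j, hj, (hm j hj) ▸ hja⟩
    by_cases h1 : ∃ j ≤ n, a ≤ mart s j X
    · rw [if_pos h1, if_pos (hc.1 h1)]
      exact ih h'
    · rw [if_neg h1, if_neg (fun h2 => h1 (hc.2 h2))]
      exact mart_local h (le_refl (n+1))

lemma stopped_avg (a s : ℝ) (n : ℕ) (X : ℕ → Bool) (hX : X n = false) :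
    stopped a s (n + 1) X + stopped a s (n + 1) (Function.update X n true)
      = 2 * stopped a s n X := by
  set Y := Function.update X n true with hY
  have hagree : ∀ i < n, X i = Y i := fun i hi => by
    rw [hY, Function.update_of_ne (Nat.ne_of_lt hi)]
  have hmXY : ∀ j ≤ n, mart s j X = mart s j Y := fun j hj => mart_local hagree hj
  rw [stopped, stopped]
  by_cases hc : ∃ j ≤ n, a ≤ mart s j X
  · have hcY : ∃ j ≤ n, a ≤ mart s j Y := by
      obtain ⟨j, hj, hja⟩ := hc; exact ⟨j, hj, (hmXY j hj) ▸ hja⟩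
    rw [if_pos hc, if_pos hcY, ← stopped_local hagree, two_mul]
  · have hcY : ¬ ∃ j ≤ n, a ≤ mart s j Y := by
      rintro ⟨j, hj, hja⟩; exact hc ⟨j, hj, (hmXY j hj) ▸ hja⟩
    rw [if_neg hc, if_neg hcY]
    rw [mart_succ, mart_succ, ← hmXY n le_rfl, ← mul_add]
    rw [stopped_eq_mart hc]
    have hXn : ((X n).toNat : ℝ) = 0 := by rw [hX]; simp
    have hYn : ((Y n).toNat : ℝ) = 1 := by rw [hY, Function.update_self]; simp
    rw [hXn, hYn]
    rw [← add_div, Real.cosh_eq]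
    have : Real.exp (s * (0 - 1 / 2)) + Real.exp (s * (1 - 1 / 2))
        = Real.exp (-(s/2)) + Real.exp (s/2) := by ring_nf
    rw [this]
    have hpos : (0:ℝ) < Real.exp (s / 2) + Real.exp (-(s / 2)) :=
      add_pos (Real.exp_pos _) (Real.exp_pos _)
    field_simp
    ring

lemma sum_stopped (a s : ℝ) (n : ℕ) :
    ∑ v ∈ cube n, stopped a s n v = 2 ^ n := by
  induction n with
  | zero => simp [cube, stopped]
  | succ n ih =>
    rw [sum_cube_succ]
    have : ∀ v ∈ cube n,
        stopped a s (n + 1) v + stopped a s (n + 1) (Function.update v n true)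
          = 2 * stopped a s n v := fun v hv => stopped_avg a s n v (cube_apply hv le_rfl)
    rw [Finset.sum_congr rfl this, ← Finset.mul_sum, ih]
    ring

open Classical in
lemma card_le (a s : ℝ) (n : ℕ) :
    (((cube n).filter (fun X => ∃ k ≤ n, a ≤ mart s k X)).card : ℝ) * a ≤ 2 ^ n := by
  calc (((cube n).filter (fun X => ∃ k ≤ n, a ≤ mart s k X)).card : ℝ) * a
      = ∑ _v ∈ (cube n).filter (fun X => ∃ k ≤ n, a ≤ mart s k X), a := by
        rw [Finset.sum_const, nsmul_eq_mul]
    _ ≤ ∑ v ∈ (cube n).filter (fun X => ∃ k ≤ n, a ≤ mart s k X), stopped a s n v :=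
        Finset.sum_le_sum fun v hv => le_stopped (Finset.mem_filter.1 hv).2
    _ ≤ ∑ v ∈ cube n, stopped a s n v :=
        Finset.sum_le_sum_of_subset_of_nonneg (Finset.filter_subset _ _)
          fun v _ _ => stopped_nonneg a s n v
    _ = 2 ^ n := sum_stopped a s n

/-- Maximal inequality for the exponential martingale, measure form. -/
lemma measure_mart_le {μ : Measure (ℕ → Bool)} (hμ : IsFairCoin μ) {a : ℝ} (ha : 0 < a)
    (s : ℝ) (n : ℕ) :
    μ {X | ∃ k ≤ n, a ≤ mart s k X} ≤ ENNReal.ofReal (1 / a) := by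
  classical
  have hp : ∀ X Y : ℕ → Bool, (∀ i < n, X i = Y i) → (∃ k ≤ n, a ≤ mart s k X) →
      (∃ k ≤ n, a ≤ mart s k Y) := by
    rintro X Y hXY ⟨k, hk, hka⟩
    exact ⟨k, hk, (mart_local hXY hk) ▸ hka⟩
  rw [measure_local hμ n _ hp]
  have key : ∀ m : ℕ, (m : ℝ) * a ≤ 2 ^ n →
      (m : ENNReal) * (1 / 2) ^ n ≤ ENNReal.ofReal (1 / a) := by
    intro c hc
    have hcard : (c : ℝ) ≤ 2 ^ n / a := (le_div_iff₀ ha).2 hc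
    have hhalf : ENNReal.ofReal (1 / 2 : ℝ) = 1 / 2 := by
      rw [ENNReal.ofReal_div_of_pos (by norm_num), ENNReal.ofReal_one, ENNReal.ofReal_ofNat]
    have h2 : ((1 : ENNReal) / 2) ^ n = ENNReal.ofReal ((1 / 2 : ℝ) ^ n) := by
      rw [ENNReal.ofReal_pow (by norm_num), hhalf]
    calc (c : ENNReal) * (1 / 2) ^ n
        = ENNReal.ofReal ((c : ℝ) * (1 / 2 : ℝ) ^ n) := by
          rw [ENNReal.ofReal_mul (by positivity), h2, ENNReal.ofReal_natCast]
      _ ≤ ENNReal.ofReal ((2 ^ n / a) * (1 / 2 : ℝ) ^ n) :=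
          ENNReal.ofReal_le_ofReal (mul_le_mul_of_nonneg_right hcard (by positivity))
      _ = ENNReal.ofReal (1 / a) := by
          congr 1
          have h2n : (2 : ℝ) ^ n ≠ 0 := by positivity
          field_simp
          rw [← mul_pow]; norm_num
  apply key
  rw [Finset.filter_congr_decidable]
  exact card_le a s n

/-- `cosh x ≤ exp (x²/2 + x⁴)` for `|x| ≤ 1`. -/
lemma cosh_le_exp {x : ℝ} (hx : |x| ≤ 1) :
    Real.cosh x ≤ Real.exp (x ^ 2 / 2 + x ^ 4) := by
  have key : Real.cosh x ≤ 1 + x ^ 2 / 2 + x ^ 4 := by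
    have hb1 := Real.exp_bound hx (n := 4) (by norm_num)
    have hb2 := Real.exp_bound (x := -x) (by rwa [abs_neg]) (n := 4) (by norm_num)
    rw [abs_neg] at hb2
    norm_num [Nat.factorial, Finset.sum_range_succ] at hb1 hb2
    have e1 := (abs_sub_le_iff.1 hb1).1
    have e2 := (abs_sub_le_iff.1 hb2).1
    have habs : |x| ^ 4 = x ^ 4 := by
      rw [← abs_pow, abs_of_nonneg (by positivity)]
    have hx4 : x ^ 4 ≤ 1 := by
      calc x ^ 4 = |x| ^ 4 := habs.symm
        _ ≤ 1 ^ 4 := pow_le_pow_left₀ (abs_nonneg x) hx 4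
        _ = 1 := one_pow 4
    rw [Real.cosh_eq]
    nlinarith [e1, e2]
  calc Real.cosh x ≤ 1 + x ^ 2 / 2 + x ^ 4 := key
    _ ≤ Real.exp (x ^ 2 / 2 + x ^ 4) := by
        have := Real.add_one_le_exp (x ^ 2 / 2 + x ^ 4)
        linarith

/-- Hoeffding-type maximal inequality. -/
lemma measure_hoeffding {μ : Measure (ℕ → Bool)} (hμ : IsFairCoin μ) {t : ℝ} (ht : 0 < t)
    {n : ℕ} (hn : 0 < n) (hts : 2 * t ≤ n) :
    μ {X | ∃ k ≤ n, t ≤ coinSum X k - k / 2}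
      ≤ ENNReal.ofReal (Real.exp (-(2 * t ^ 2) / n + 16 * t ^ 4 / n ^ 3)) := by
  have hnpos : (0 : ℝ) < n := Nat.cast_pos.2 hn
  set s : ℝ := 4 * t / n with hs
  have hspos : 0 < s := by positivity
  have hs2 : s / 2 ≤ 1 := by
    rw [hs, div_div, div_le_one (by positivity)]
    linarith
  have hs2abs : |s / 2| ≤ 1 := by
    rwa [abs_of_nonneg (by positivity)]
  set a : ℝ := Real.exp (s * t) / (Real.cosh (s / 2)) ^ n with hadef
  have ha : 0 < a := by positivity
  have hsub : {X : ℕ → Bool | ∃ k ≤ n, t ≤ coinSum X k - k / 2}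
      ⊆ {X | ∃ k ≤ n, a ≤ mart s k X} := by
    rintro X ⟨k, hk, hkt⟩
    refine ⟨k, hk, ?_⟩
    rw [mart, hadef]
    refine div_le_div₀ (Real.exp_pos _).le ?_ (pow_pos (Real.cosh_pos _) k) ?_
    · exact Real.exp_le_exp.2 (mul_le_mul_of_nonneg_left hkt hspos.le)
    · exact pow_le_pow_right₀ (Real.one_le_cosh _) hk
  have h1a : 1 / a ≤ Real.exp (-(2 * t ^ 2) / n + 16 * t ^ 4 / n ^ 3) := by
    rw [hadef, one_div_div]
    have hcosh : Real.cosh (s / 2) ≤ Real.exp ((s / 2) ^ 2 / 2 + (s / 2) ^ 4) :=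
      cosh_le_exp hs2abs
    calc (Real.cosh (s / 2)) ^ n / Real.exp (s * t)
        ≤ (Real.exp ((s / 2) ^ 2 / 2 + (s / 2) ^ 4)) ^ n / Real.exp (s * t) := by
          gcongr

      _ = Real.exp (n * ((s / 2) ^ 2 / 2 + (s / 2) ^ 4) - s * t) := by
          rw [← Real.exp_nat_mul, ← Real.exp_sub]
      _ = Real.exp (-(2 * t ^ 2) / n + 16 * t ^ 4 / n ^ 3) := by
          congr 1
          rw [hs]
          field_simp
          ring
  exact le_trans (measure_mono hsub)
    (le_trans (measure_mart_le hμ ha s n) (ENNReal.ofReal_le_ofReal h1a))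

lemma log_le_two_sqrt {x : ℝ} (hx : 1 ≤ x) : Real.log x ≤ 2 * Real.sqrt x := by
  have hx0 : 0 < x := lt_of_lt_of_le one_pos hx
  have hs0 : 0 < Real.sqrt x := Real.sqrt_pos.2 hx0
  have h1 : Real.log x = 2 * Real.log (Real.sqrt x) := by
    conv_lhs => rw [← Real.sq_sqrt hx0.le]
    rw [Real.log_pow]
    norm_num
  rw [h1]
  have h2 : Real.log (Real.sqrt x) ≤ Real.sqrt x - 1 := Real.log_le_sub_one_of_pos hs0
  linarith

lemma loglog_mono_aux {a b : ℝ} (ha : Real.exp 1 ≤ a) (hab : a ≤ b) :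
    (a / 2) * Real.log (Real.log a) ≤ (b / 2) * Real.log (Real.log b) := by
  have ha0 : 0 < a := lt_of_lt_of_le (Real.exp_pos 1) ha
  have h1a : 1 ≤ Real.log a := by
    rw [← Real.log_exp 1]
    exact Real.log_le_log (Real.exp_pos 1) ha
  have hll : Real.log a ≤ Real.log b := Real.log_le_log ha0 hab
  have hLa : 0 ≤ Real.log (Real.log a) := Real.log_nonneg h1a
  have hLab : Real.log (Real.log a) ≤ Real.log (Real.log b) :=
    Real.log_le_log (by linarith) hll
  exact mul_le_mul (by linarith) hLab hLa (by linarith)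

/-- The geometric subsequence. -/
noncomputable def lilN (lam' : ℝ) (j : ℕ) : ℕ := ⌈lam' ^ j⌉₊

/-- The thresholds. -/
noncomputable def lilT (lam' : ℝ) (j : ℕ) : ℝ :=
  lam' * Real.sqrt (((lilN lam' j : ℝ) / 2) * Real.log (Real.log (lilN lam' j)))

/-- The bad events. -/
def lilA (lam' : ℝ) (j : ℕ) : Set (ℕ → Bool) :=
  {X | ∃ k ≤ lilN lam' (j + 1), lilT lam' j ≤ coinSum X k - k / 2}

lemma lilN_pos {lam' : ℝ} (hl : 1 < lam') (j : ℕ) : 0 < lilN lam' j :=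
  Nat.ceil_pos.2 (by positivity)

lemma lilN_le {lam' : ℝ} (hl : 1 < lam') (j : ℕ) : (lam' : ℝ) ^ j ≤ lilN lam' j :=
  Nat.le_ceil _

lemma lilN_lt {lam' : ℝ} (hl : 1 < lam') (j : ℕ) : ((lilN lam' j : ℝ)) < lam' ^ j + 1 :=
  Nat.ceil_lt_add_one (by positivity)

lemma lilN_mono {lam' : ℝ} (hl : 1 < lam') : Monotone (lilN lam') :=
  fun _ _ hab => Nat.ceil_mono (pow_le_pow_right₀ hl.le hab)

lemma lilN_tendsto {lam' : ℝ} (hl : 1 < lam') :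
    Filter.Tendsto (fun j => (lilN lam' j : ℝ)) atTop atTop :=
  tendsto_atTop_mono (lilN_le hl) (tendsto_pow_atTop_atTop_of_one_lt hl)

set_option maxHeartbeats 1000000 in
lemma lil_bound {μ : Measure (ℕ → Bool)} (hμ : IsFairCoin μ) {lam' : ℝ} (hl : 1 < lam') :
    ∀ᶠ j in atTop, μ (lilA lam' j) ≤ ENNReal.ofReal ((j : ℝ) ^ (-((lam' + 3) / 4))) := by
  have hl0 : (0:ℝ) < lam' := by linarith
  set β : ℝ := (lam' + 1) / 2 with hβdef
  set βp : ℝ := (3 * lam' + 1) / 4 with hβpdef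
  set βpp : ℝ := (lam' + 3) / 4 with hβppdef
  have hβ1 : 1 < βpp := by rw [hβppdef]; linarith
  have hβ2 : βpp < β := by rw [hβppdef, hβdef]; linarith
  have hβ3 : β < βp := by rw [hβdef, hβpdef]; linarith
  have hβ4 : βp < lam' := by rw [hβpdef]; linarith
  have hβp0 : 0 < βp := by linarith
  -- eventual facts
  have hev1 : ∀ᶠ j in atTop, Real.exp (Real.exp 1) ≤ (lilN lam' j : ℝ) :=
    (lilN_tendsto hl).eventually_ge_atTop _
  have hev2 : ∀ᶠ j in atTop, 4 * lam' ^ 2 ≤ Real.sqrt (lilN lam' j) := by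
    filter_upwards [(lilN_tendsto hl).eventually_ge_atTop ((4 * lam' ^ 2) ^ 2)] with j hj
    calc 4 * lam' ^ 2 = Real.sqrt ((4 * lam' ^ 2) ^ 2) := (Real.sqrt_sq (by positivity)).symm
      _ ≤ Real.sqrt (lilN lam' j) := Real.sqrt_le_sqrt hj
  have hev3 : ∀ᶠ j in atTop, 8 * lam' ^ 4 / (βp - β) ≤ Real.sqrt (lilN lam' j) := by
    have hc : (0:ℝ) ≤ 8 * lam' ^ 4 / (βp - β) := div_nonneg (by positivity) (by linarith)
    filter_upwards [(lilN_tendsto hl).eventually_ge_atTop ((8 * lam' ^ 4 / (βp - β)) ^ 2)]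
      with j hj
    calc 8 * lam' ^ 4 / (βp - β) = Real.sqrt ((8 * lam' ^ 4 / (βp - β)) ^ 2) :=
          (Real.sqrt_sq hc).symm
      _ ≤ Real.sqrt (lilN lam' j) := Real.sqrt_le_sqrt hj
  have hev4 : ∀ᶠ j in atTop, βp / (lam' - βp) ≤ lam' ^ (j + 1) := by
    have := ((tendsto_pow_atTop_atTop_of_one_lt hl).comp
      (tendsto_add_atTop_nat 1)).eventually_ge_atTop (βp / (lam' - βp))
    filter_upwards [this] with j hj
    exact hj
  have hlogj : Filter.Tendsto (fun j : ℕ => Real.log j) atTop atTop :=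
    Real.tendsto_log_atTop.comp tendsto_natCast_atTop_atTop
  have hev5 : ∀ᶠ j : ℕ in atTop,
      (-(β * Real.log (Real.log lam'))) / (β - βpp) ≤ Real.log j :=
    hlogj.eventually_ge_atTop _
  have hev6 : ∀ᶠ j : ℕ in atTop, 1 ≤ j := eventually_ge_atTop 1
  filter_upwards [hev1, hev2, hev3, hev4, hev5, hev6] with j h1 h2 h3 h4 h5 h6
  -- notation
  set L : ℝ := Real.log (Real.log (lilN lam' j)) with hLdef
  set t : ℝ := lilT lam' j with htdef
  set m : ℕ := lilN lam' j with hmdef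
  set n : ℕ := lilN lam' (j + 1) with hndef
  have hm1 : (1:ℝ) ≤ m := by exact_mod_cast lilN_pos hl j
  have hn1 : (1:ℝ) ≤ n := by exact_mod_cast lilN_pos hl (j + 1)
  have hmn : (m:ℝ) ≤ n := by exact_mod_cast lilN_mono hl (Nat.le_succ j)
  have hnpos : (0:ℝ) < n := by linarith
  have hL1 : 1 ≤ L := by
    rw [hLdef]
    have hlog1 : Real.exp 1 ≤ Real.log m := by
      rw [← Real.log_exp (Real.exp 1)]
      exact Real.log_le_log (Real.exp_pos _) h1
    calc (1:ℝ) = Real.log (Real.exp 1) := (Real.log_exp 1).symm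
      _ ≤ Real.log (Real.log m) := Real.log_le_log (Real.exp_pos 1) hlog1
  have hL0 : 0 < L := by linarith
  have htpos : 0 < t := by
    rw [htdef, lilT]
    exact mul_pos hl0 (Real.sqrt_pos.2 (by positivity))
  have hsq : t ^ 2 = lam' ^ 2 * (((m:ℝ) / 2) * L) := by
    rw [htdef, lilT, mul_pow, Real.sq_sqrt (by positivity)]
  have hsqrtm : Real.sqrt m ^ 2 = (m:ℝ) := Real.sq_sqrt (by positivity)
  have hsqrtm0 : 0 ≤ Real.sqrt (m:ℝ) := Real.sqrt_nonneg _
  have hLle : L ≤ 2 * Real.sqrt m := by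
    have hlogm0 : 0 < Real.log m := by
      calc (0:ℝ) < Real.exp 1 := Real.exp_pos 1
        _ ≤ Real.log m := by
          rw [← Real.log_exp (Real.exp 1)]
          exact Real.log_le_log (Real.exp_pos _) h1
    have e1 : L ≤ Real.log m - 1 := Real.log_le_sub_one_of_pos hlogm0
    have e2 : Real.log m ≤ 2 * Real.sqrt m := log_le_two_sqrt hm1
    linarith
  -- c2 : 2 t ≤ n
  have c2 : 2 * t ≤ (n:ℝ) := by
    have h2t : (2 * t) ^ 2 ≤ (n:ℝ) ^ 2 := by
      calc (2 * t) ^ 2 = 2 * lam' ^ 2 * ((m:ℝ) * L) := by rw [mul_pow, hsq]; ring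
        _ ≤ 2 * lam' ^ 2 * ((m:ℝ) * (2 * Real.sqrt m)) := by
            refine mul_le_mul_of_nonneg_left ?_ (by positivity)
            exact mul_le_mul_of_nonneg_left hLle (by linarith)
        _ = (4 * lam' ^ 2) * ((m:ℝ) * Real.sqrt m) := by ring
        _ ≤ Real.sqrt m * ((m:ℝ) * Real.sqrt m) :=
            mul_le_mul_of_nonneg_right h2 (by positivity)
        _ = (m:ℝ) * (Real.sqrt m * Real.sqrt m) := by ring
        _ = (m:ℝ) * (m:ℝ) := by rw [Real.mul_self_sqrt (by positivity)]
        _ ≤ (n:ℝ) * n := mul_le_mul hmn hmn (by linarith) (by linarith)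
        _ = (n:ℝ) ^ 2 := by ring
    have ht0 : (0:ℝ) ≤ 2 * t := by linarith
    calc 2 * t = Real.sqrt ((2 * t) ^ 2) := (Real.sqrt_sq ht0).symm
      _ ≤ Real.sqrt ((n:ℝ) ^ 2) := Real.sqrt_le_sqrt h2t
      _ = (n:ℝ) := Real.sqrt_sq (by linarith)
  -- c3 : βp * n ≤ lam'^2 * m
  have c3 : βp * (n:ℝ) ≤ lam' ^ 2 * m := by
    have hA : lam' ^ 2 * lam' ^ j ≤ lam' ^ 2 * m :=
      mul_le_mul_of_nonneg_left (lilN_le hl j) (by positivity)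
    have hB : lam' ^ 2 * lam' ^ j = lam' * lam' ^ (j + 1) := by
      rw [pow_succ]; ring
    have hC : βp ≤ lam' ^ (j + 1) * (lam' - βp) := (div_le_iff₀ (by linarith)).1 h4
    have hD : βp * (n:ℝ) ≤ βp * (lam' ^ (j + 1) + 1) :=
      mul_le_mul_of_nonneg_left (lilN_lt hl (j + 1)).le hβp0.le
    nlinarith [hA, hB, hC, hD]
  -- c4 : 4 lam'^4 L ≤ (βp - β) m
  have c4 : 4 * lam' ^ 4 * L ≤ (βp - β) * m := by
    have e1 : 4 * lam' ^ 4 * L ≤ 8 * lam' ^ 4 * Real.sqrt m := by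
      have := mul_le_mul_of_nonneg_left hLle (show (0:ℝ) ≤ 4 * lam' ^ 4 by positivity)
      linarith
    have e2 : 8 * lam' ^ 4 ≤ (βp - β) * Real.sqrt m := by
      have := (div_le_iff₀ (by linarith : (0:ℝ) < βp - β)).1 h3
      linarith [this]
    nlinarith [e1, e2, hsqrtm, hsqrtm0]
  -- c5 : βpp log j ≤ β L
  have c5 : βpp * Real.log j ≤ β * L := by
    have hj0 : (0:ℝ) < j := by exact_mod_cast h6
    have hloglam : 0 < Real.log lam' := Real.log_pos hl
    have hLlow : Real.log j + Real.log (Real.log lam') ≤ L := by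
      have s1 : (j : ℝ) * Real.log lam' ≤ Real.log m := by
        rw [← Real.log_pow]
        exact Real.log_le_log (by positivity) (lilN_le hl j)
      have s2 : Real.log ((j:ℝ) * Real.log lam') ≤ L := by
        rw [hLdef]
        exact Real.log_le_log (by positivity) s1
      rwa [Real.log_mul (ne_of_gt hj0) (ne_of_gt hloglam)] at s2
    have s3 : -(β * Real.log (Real.log lam')) ≤ Real.log j * (β - βpp) :=
      (div_le_iff₀ (by linarith : (0:ℝ) < β - βpp)).1 h5
    nlinarith [hLlow, s3]
  -- put everything together
  have hmeas := measure_hoeffding hμ htpos (lilN_pos hl (j + 1)) c2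
  refine le_trans hmeas (ENNReal.ofReal_le_ofReal ?_)
  have hj0 : (0:ℝ) < j := by exact_mod_cast h6
  rw [Real.rpow_def_of_pos hj0]
  apply Real.exp_le_exp.2
  -- exponent inequality
  have hA1 : βp * L ≤ 2 * t ^ 2 / n := by
    rw [le_div_iff₀ hnpos, hsq]
    nlinarith [c3, hL0]
  have hA2 : 16 * t ^ 4 / (n:ℝ) ^ 3 ≤ (βp - β) * L := by
    rw [div_le_iff₀ (by positivity)]
    have ht4 : t ^ 4 = (lam' ^ 2 * (((m:ℝ) / 2) * L)) ^ 2 := by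
      rw [show t ^ 4 = (t ^ 2) ^ 2 by ring, hsq]
    have hm3 : (m:ℝ) ^ 3 ≤ (n:ℝ) ^ 3 :=
      pow_le_pow_left₀ (by linarith) hmn 3
    have q1 : (4 * lam' ^ 4 * L) * ((m:ℝ) ^ 2 * L) ≤ ((βp - β) * m) * ((m:ℝ) ^ 2 * L) :=
      mul_le_mul_of_nonneg_right c4 (by positivity)
    have q2 : (βp - β) * (m:ℝ) ^ 3 * L ≤ (βp - β) * (n:ℝ) ^ 3 * L :=
      mul_le_mul_of_nonneg_right
        (mul_le_mul_of_nonneg_left hm3 (by linarith)) hL0.le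
    nlinarith [ht4, q1, q2]
  have hfinal : βpp * Real.log j ≤ 2 * t ^ 2 / n - 16 * t ^ 4 / (n:ℝ) ^ 3 := by
    have : β * L ≤ 2 * t ^ 2 / n - 16 * t ^ 4 / (n:ℝ) ^ 3 := by linarith
    linarith [c5]
  have hrw : -(2 * t ^ 2) / (n:ℝ) = -(2 * t ^ 2 / n) := by ring
  linarith [hfinal]

lemma lil_upper_aux {μ : Measure (ℕ → Bool)} (hμ : IsFairCoin μ) {lam' : ℝ} (hl : 1 < lam') :
    ∀ᵐ X ∂μ, ∃ N : ℕ, ∀ n : ℕ, N < n →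
      coinSum X n ≤ n / 2 + lam' * Real.sqrt ((n / 2) * Real.log (Real.log n)) := by
  have hl0 : (0:ℝ) < lam' := by linarith
  set βpp : ℝ := (lam' + 3) / 4 with hβppdef
  have hβ1 : 1 < βpp := by rw [hβppdef]; linarith
  obtain ⟨J1, hJ1⟩ := eventually_atTop.1 (lil_bound hμ hl)
  -- Borel--Cantelli for the shifted sequence
  have hsum : (∑' k : ℕ, μ (lilA lam' (J1 + k))) ≠ ⊤ := by
    have hsummable : Summable (fun k : ℕ => (k : ℝ) ^ (-βpp)) :=
      Real.summable_nat_rpow.2 (by linarith)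
    have hnonneg : ∀ k : ℕ, (0:ℝ) ≤ (k : ℝ) ^ (-βpp) :=
      fun k => Real.rpow_nonneg (Nat.cast_nonneg k) _
    have step1 : (∑' k : ℕ, μ (lilA lam' (J1 + k)))
        ≤ ∑' k : ℕ, ENNReal.ofReal (((J1 + k : ℕ) : ℝ) ^ (-βpp)) :=
      ENNReal.tsum_le_tsum (fun k => hJ1 _ (Nat.le_add_right _ _))
    have step2 : (∑' k : ℕ, ENNReal.ofReal (((J1 + k : ℕ) : ℝ) ^ (-βpp)))
        ≤ ∑' k : ℕ, ENNReal.ofReal ((k : ℝ) ^ (-βpp)) :=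
      ENNReal.tsum_comp_le_tsum_of_injective (add_right_injective J1)
        (fun k : ℕ => ENNReal.ofReal ((k : ℝ) ^ (-βpp)))
    have step3 : (∑' k : ℕ, ENNReal.ofReal ((k : ℝ) ^ (-βpp))) < ⊤ := by
      rw [← ENNReal.ofReal_tsum_of_nonneg hnonneg hsummable]
      exact ENNReal.ofReal_lt_top
    exact ne_of_lt (lt_of_le_of_lt (le_trans step1 step2) step3)
  have hae := MeasureTheory.ae_eventually_notMem hsum
  -- deterministic threshold
  obtain ⟨J3, hJ3⟩ := eventually_atTop.1
    ((lilN_tendsto hl).eventually_ge_atTop (Real.exp 1))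
  filter_upwards [hae] with X hX
  obtain ⟨J2, hJ2⟩ := eventually_atTop.1 hX
  set J0 : ℕ := max (J1 + J2) J3 with hJ0def
  refine ⟨lilN lam' (J0 + 1), fun n hn => ?_⟩
  have hex : ∃ j, n ≤ lilN lam' (j + 1) := by
    obtain ⟨j, hj⟩ := ((tendsto_pow_atTop_atTop_of_one_lt hl).eventually_ge_atTop (n:ℝ)).exists
    refine ⟨j, ?_⟩
    have h1 : (n : ℝ) ≤ lilN lam' j := le_trans hj (lilN_le hl j)
    have h2 : ((lilN lam' j : ℕ) : ℝ) ≤ ((lilN lam' (j + 1) : ℕ) : ℝ) := by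
      exact_mod_cast lilN_mono hl (Nat.le_succ j)
    exact_mod_cast le_trans h1 h2
  set j : ℕ := Nat.find hex with hjdef
  have hjspec : n ≤ lilN lam' (j + 1) := Nat.find_spec hex
  have hJ0j : J0 < j := by
    by_contra hcon
    push_neg at hcon
    have h1 : lilN lam' (j + 1) ≤ lilN lam' (J0 + 1) := lilN_mono hl (by omega)
    omega
  have hjn : lilN lam' j < n := by
    have h9 : ¬ n ≤ lilN lam' ((j - 1) + 1) := Nat.find_min hex (by omega)
    have h10 : j - 1 + 1 = j := by omega
    rw [h10] at h9
    omega
  have hXnot : X ∉ lilA lam' j := by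
    have hje : j = J1 + (j - J1) := by omega
    rw [hje]
    exact hJ2 _ (by omega)
  have hlt : coinSum X n - (n:ℝ) / 2 < lilT lam' j := by
    by_contra hcon
    push_neg at hcon
    exact hXnot ⟨n, hjspec, hcon⟩
  have hmono2 : lilT lam' j ≤ lam' * Real.sqrt (((n:ℝ) / 2) * Real.log (Real.log n)) := by
    rw [lilT]
    refine mul_le_mul_of_nonneg_left (Real.sqrt_le_sqrt ?_) hl0.le
    exact loglog_mono_aux (hJ3 j (by omega)) (by exact_mod_cast hjn.le)
  linarith


/-- Upper half of the Law of the Iterated Logarithm: for `μ`-almost every `X`,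
for every `λ > 1` there is `N` such that for all `n > N`,
`S_n(X) ≤ n/2 + λ √((n/2) log log n)`. -/
theorem lil_upper (μ : Measure (ℕ → Bool)) (hμ : IsFairCoin μ) :
    ∀ᵐ X ∂μ, ∀ lam : ℝ, 1 < lam → ∃ N : ℕ, ∀ n : ℕ, N < n →
      coinSum X n ≤ n / 2 + lam * Real.sqrt ((n / 2) * Real.log (Real.log n)) := by
  have hall : ∀ᵐ X ∂μ, ∀ m : ℕ, ∃ N : ℕ, ∀ n : ℕ, N < n →
      coinSum X n ≤ n / 2 + (1 + 1 / (m + 1)) * Real.sqrt ((n / 2) * Real.log (Real.log n)) := by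
    rw [ae_all_iff]
    intro m
    have hm : (1:ℝ) < 1 + 1 / (m + 1) := by
      have : (0:ℝ) < 1 / (m + 1) := by positivity
      linarith
    exact lil_upper_aux hμ hm
  filter_upwards [hall] with X hX lam hlam
  obtain ⟨m, hm⟩ := exists_nat_one_div_lt (show (0:ℝ) < lam - 1 by linarith)
  obtain ⟨N, hN⟩ := hX m
  refine ⟨N, fun n hn => ?_⟩
  have h1 := hN n hn
  have h2 : (1 + 1 / (m + 1 : ℝ)) * Real.sqrt ((n / 2) * Real.log (Real.log n))
      ≤ lam * Real.sqrt ((n / 2) * Real.log (Real.log n)) :=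
    mul_le_mul_of_nonneg_right (by linarith) (Real.sqrt_nonneg _)
  linarith
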